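/- arXiv:1607.03214 — 2 statements merged into one kernel-verified Lean document; each statement's English description precedes it below -/
import Mathlib

section
/- Let Φ₁, Φ₂, Φ₃ : [0,∞) → [0,∞) be Young functions with generalized inverses Φᵢ⁻¹(s) := inf { r ≥ 0 : Φᵢ(r) > s }, and suppose Φ₁⁻¹(t)·Φ₂⁻¹(t) ≤ Φ₃⁻¹(t) for every t ≥ 0. If f, g : ℝⁿ → ℝ are measurable with ‖f‖_{L_{Φ₁}} < ∞ and ‖g‖_{L_{Φ₂}} < ∞, then ‖f·g‖_{L_{Φ₃}} ≤ 2·‖f‖_{L_{Φ₁}}·‖g‖_{L_{Φ₂}} (in particular fg ∈ L_{Φ₃}(ℝⁿ)). -/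
open MeasureTheory Filter Set
open scoped ENNReal

/-- A Young function: convex on `[0,∞)`, left-continuous, `Φ 0 = 0`,
`Φ t → ∞` as `t → ∞`, and taking values in `[0,∞)`. -/
def IsYoungFunction (Φ : ℝ → ℝ) : Prop :=
  ConvexOn ℝ (Set.Ici 0) Φ ∧
  (∀ t : ℝ, 0 ≤ t → ContinuousWithinAt Φ (Set.Iic t) t) ∧
  Φ 0 = 0 ∧
  Tendsto Φ atTop atTop ∧
  ∀ t : ℝ, 0 ≤ t → 0 ≤ Φ t

/-- Generalized inverse `Φ⁻¹(s) = inf {r ≥ 0 : Φ r > s}`. -/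
noncomputable def youngInv (Φ : ℝ → ℝ) (s : ℝ) : ℝ :=
  sInf {r : ℝ | 0 ≤ r ∧ s < Φ r}

lemma young_monoOn {Φ : ℝ → ℝ} (h : IsYoungFunction Φ) : MonotoneOn Φ (Ici 0) := by
  rintro x (hx : (0:ℝ) ≤ x) y (hy : (0:ℝ) ≤ y) hxy
  rcases eq_or_lt_of_le hxy with rfl | hlt
  · exact le_refl _
  have hy0 : 0 < y := lt_of_le_of_lt hx hlt
  have hd0 : 0 ≤ x / y := by positivity
  have hd1 : x / y ≤ 1 := (div_le_one hy0).2 hxy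
  have key : Φ ((1 - x / y) • (0:ℝ) + (x / y) • y) ≤ (1 - x / y) • Φ 0 + (x / y) • Φ y :=
    h.1.2 (mem_Ici.2 le_rfl) (mem_Ici.2 hy) (by linarith) hd0 (by ring)
  have hxy' : (1 - x / y) • (0:ℝ) + (x / y) • y = x := by
    simp only [smul_eq_mul]; field_simp; ring
  rw [hxy', smul_eq_mul, smul_eq_mul] at key
  have hΦy : 0 ≤ Φ y := h.2.2.2.2 y hy
  calc Φ x ≤ (1 - x / y) * Φ 0 + (x / y) * Φ y := key
    _ = (x / y) * Φ y := by rw [h.2.2.1]; ring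
    _ ≤ 1 * Φ y := by apply mul_le_mul_of_nonneg_right hd1 hΦy
    _ = Φ y := one_mul _

lemma young_half_le {Φ : ℝ → ℝ} (h : IsYoungFunction Φ) {x : ℝ} (hx : 0 ≤ x) :
    Φ (x / 2) ≤ Φ x / 2 := by
  have key : Φ (((1:ℝ)/2) • (0:ℝ) + ((1:ℝ)/2) • x) ≤ ((1:ℝ)/2) • Φ 0 + ((1:ℝ)/2) • Φ x :=
    h.1.2 (mem_Ici.2 le_rfl) (mem_Ici.2 hx) (by norm_num) (by norm_num) (by norm_num)
  have e : ((1:ℝ)/2) • (0:ℝ) + ((1:ℝ)/2) • x = x / 2 := by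
    simp only [smul_eq_mul]; ring
  rw [e] at key
  simp only [smul_eq_mul, h.2.2.1] at key
  linarith

lemma young_set_nonempty {Φ : ℝ → ℝ} (h : IsYoungFunction Φ) (s : ℝ) :
    {r : ℝ | 0 ≤ r ∧ s < Φ r}.Nonempty := by
  have := (h.2.2.2.1.eventually (eventually_gt_atTop s)).and (eventually_ge_atTop (0:ℝ))
  obtain ⟨r, hr1, hr2⟩ := this.exists
  exact ⟨r, hr2, hr1⟩

lemma young_set_bddBelow (Φ : ℝ → ℝ) (s : ℝ) : BddBelow {r : ℝ | 0 ≤ r ∧ s < Φ r} :=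
  ⟨0, fun _ hx => hx.1⟩

lemma youngInv_nonneg (Φ : ℝ → ℝ) (s : ℝ) : 0 ≤ youngInv Φ s :=
  Real.sInf_nonneg (fun _ hx => hx.1)

lemma youngInv_mono {Φ : ℝ → ℝ} (h : IsYoungFunction Φ) {s t : ℝ} (hst : s ≤ t) :
    youngInv Φ s ≤ youngInv Φ t := by
  apply csInf_le_csInf (young_set_bddBelow Φ s) (young_set_nonempty h t)
  rintro r ⟨hr0, hr⟩
  exact ⟨hr0, lt_of_le_of_lt hst hr⟩

lemma le_youngInv_comp {Φ : ℝ → ℝ} (h : IsYoungFunction Φ) {a : ℝ} (ha : 0 ≤ a) :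
    a ≤ youngInv Φ (Φ a) := by
  apply le_csInf (young_set_nonempty h _)
  rintro r ⟨hr0, hr⟩
  by_contra hcon
  push_neg at hcon
  exact absurd (young_monoOn h (mem_Ici.2 hr0) (mem_Ici.2 ha) hcon.le) (not_le.2 hr)

lemma comp_youngInv_le {Φ : ℝ → ℝ} (h : IsYoungFunction Φ) {t : ℝ} (ht : 0 ≤ t) :
    Φ (youngInv Φ t) ≤ t := by
  set c := youngInv Φ t with hc
  have hc0 : 0 ≤ c := youngInv_nonneg Φ t
  have hbelow : ∀ r, 0 ≤ r → r < c → Φ r ≤ t := by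
    intro r hr0 hrc
    by_contra hcon
    push_neg at hcon
    exact absurd (csInf_le (young_set_bddBelow Φ t) ⟨hr0, hcon⟩) (not_le.2 hrc)
  rcases eq_or_lt_of_le hc0 with heq | hcpos
  · rw [← heq, h.2.2.1]; exact ht
  · have hcont : Tendsto Φ (nhdsWithin c (Iio c)) (nhds (Φ c)) :=
      (h.2.1 c hc0).mono_left (nhdsWithin_mono c Iio_subset_Iic_self)
    refine le_of_tendsto hcont ?_
    filter_upwards [self_mem_nhdsWithin,
      mem_nhdsWithin_of_mem_nhds (Ioi_mem_nhds hcpos : Ioi (0:ℝ) ∈ nhds c)] with x hx1 hx2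
    exact hbelow x (le_of_lt hx2) hx1

lemma young_prod_le {Φ₁ Φ₂ Φ₃ : ℝ → ℝ} (h₁ : IsYoungFunction Φ₁) (h₂ : IsYoungFunction Φ₂)
    (h₃ : IsYoungFunction Φ₃)
    (hinv : ∀ t : ℝ, 0 ≤ t → youngInv Φ₁ t * youngInv Φ₂ t ≤ youngInv Φ₃ t)
    {a b : ℝ} (ha : 0 ≤ a) (hb : 0 ≤ b) : Φ₃ (a * b) ≤ Φ₁ a + Φ₂ b := by
  set t := Φ₁ a + Φ₂ b with hts
  have h1a : 0 ≤ Φ₁ a := h₁.2.2.2.2 a ha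
  have h2b : 0 ≤ Φ₂ b := h₂.2.2.2.2 b hb
  have ht : 0 ≤ t := by positivity
  have hA : a ≤ youngInv Φ₁ t :=
    (le_youngInv_comp h₁ ha).trans (youngInv_mono h₁ (by linarith))
  have hB : b ≤ youngInv Φ₂ t :=
    (le_youngInv_comp h₂ hb).trans (youngInv_mono h₂ (by linarith))
  have hab : a * b ≤ youngInv Φ₃ t :=
    le_trans (mul_le_mul hA hB hb (youngInv_nonneg Φ₁ t)) (hinv t ht)
  calc Φ₃ (a * b) ≤ Φ₃ (youngInv Φ₃ t) :=
        young_monoOn h₃ (mem_Ici.2 (by positivity)) (mem_Ici.2 (youngInv_nonneg Φ₃ t)) hab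
    _ ≤ t := comp_youngInv_le h₃ ht

lemma young_measurable_comp {Φ : ℝ → ℝ} (h : IsYoungFunction Φ)
    {α : Type*} [MeasurableSpace α] {u : α → ℝ} (hu : Measurable u) (hu0 : ∀ x, 0 ≤ u x) :
    Measurable (fun x => Φ (u x)) := by
  have hm : Monotone (fun t : ℝ => Φ (max t 0)) := by
    intro s t hst
    exact young_monoOn h (mem_Ici.2 (le_max_right s 0)) (mem_Ici.2 (le_max_right t 0))
      (max_le_max hst le_rfl)
  have : (fun x => Φ (u x)) = (fun t : ℝ => Φ (max t 0)) ∘ u := by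
    funext x; simp [max_eq_left (hu0 x)]
  rw [this]
  exact hm.measurable.comp hu

/-- The Luxemburg (Orlicz) norm of `f` on `ℝⁿ`, valued in `ℝ≥0∞`
(`∞` when no admissible `b` exists). -/
noncomputable def luxNorm {n : ℕ} (Φ : ℝ → ℝ) (f : EuclideanSpace ℝ (Fin n) → ℝ) : ℝ≥0∞ :=
  sInf (ENNReal.ofReal ''
    {b : ℝ | 0 < b ∧ ∫⁻ x, ENNReal.ofReal (Φ (|f x| / b)) ≤ 1})

theorem luxNorm_mul_le {n : ℕ} (hn : 0 < n) (Φ₁ Φ₂ Φ₃ : ℝ → ℝ)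
    (h₁ : IsYoungFunction Φ₁) (h₂ : IsYoungFunction Φ₂) (h₃ : IsYoungFunction Φ₃)
    (hinv : ∀ t : ℝ, 0 ≤ t → youngInv Φ₁ t * youngInv Φ₂ t ≤ youngInv Φ₃ t)
    (f g : EuclideanSpace ℝ (Fin n) → ℝ) (hf : Measurable f) (hg : Measurable g)
    (hf' : luxNorm Φ₁ f < ⊤) (hg' : luxNorm Φ₂ g < ⊤) :
    luxNorm Φ₃ (fun x => f x * g x) ≤ 2 * luxNorm Φ₁ f * luxNorm Φ₂ g := by
  classical
  set A := {b : ℝ | 0 < b ∧ ∫⁻ x, ENNReal.ofReal (Φ₁ (|f x| / b)) ≤ 1} with hA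
  set B := {b : ℝ | 0 < b ∧ ∫⁻ x, ENNReal.ofReal (Φ₂ (|g x| / b)) ≤ 1} with hB
  have hAne : A.Nonempty := by
    by_contra hcon
    rw [not_nonempty_iff_eq_empty] at hcon
    have : luxNorm Φ₁ f = ⊤ := by
      rw [luxNorm, ← hA, hcon]; simp
    exact absurd this (ne_of_lt hf')
  have hBne : B.Nonempty := by
    by_contra hcon
    rw [not_nonempty_iff_eq_empty] at hcon
    have : luxNorm Φ₂ g = ⊤ := by
      rw [luxNorm, ← hB, hcon]; simp
    exact absurd this (ne_of_lt hg')
  -- the key admissibility claim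
  have hkey : ∀ a ∈ A, ∀ b ∈ B,
      luxNorm Φ₃ (fun x => f x * g x) ≤ ENNReal.ofReal (2 * a * b) := by
    rintro a ⟨ha0, haI⟩ b ⟨hb0, hbI⟩
    have hab0 : (0:ℝ) < 2 * a * b := by positivity
    have hpt : ∀ x, 2 * Φ₃ (|f x * g x| / (2 * a * b)) ≤ Φ₁ (|f x| / a) + Φ₂ (|g x| / b) := by
      intro x
      have hu : 0 ≤ |f x| / a := by positivity
      have hv : 0 ≤ |g x| / b := by positivity
      have heq : |f x * g x| / (2 * a * b) = ((|f x| / a) * (|g x| / b)) / 2 := by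
        rw [abs_mul, div_mul_div_comm, div_div]; ring_nf
      have h1 : Φ₃ (((|f x| / a) * (|g x| / b)) / 2)
          ≤ Φ₃ ((|f x| / a) * (|g x| / b)) / 2 := young_half_le h₃ (by positivity)
      have h2 : Φ₃ ((|f x| / a) * (|g x| / b)) ≤ Φ₁ (|f x| / a) + Φ₂ (|g x| / b) :=
        young_prod_le h₁ h₂ h₃ hinv hu hv
      rw [heq]; linarith
    have hm1 : Measurable fun x => ENNReal.ofReal (Φ₁ (|f x| / a)) :=
      ENNReal.measurable_ofReal.comp
        (young_measurable_comp h₁ ((hf.abs).div_const a) (fun x => by positivity))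
    have hept : ∀ x, (2:ℝ≥0∞) * ENNReal.ofReal (Φ₃ (|f x * g x| / (2 * a * b)))
        ≤ ENNReal.ofReal (Φ₁ (|f x| / a)) + ENNReal.ofReal (Φ₂ (|g x| / b)) := by
      intro x
      have e1 : (2:ℝ≥0∞) * ENNReal.ofReal (Φ₃ (|f x * g x| / (2 * a * b)))
          = ENNReal.ofReal (2 * Φ₃ (|f x * g x| / (2 * a * b))) := by
        rw [ENNReal.ofReal_mul (by norm_num : (0:ℝ) ≤ 2), ENNReal.ofReal_ofNat]
      rw [e1]
      exact le_trans (ENNReal.ofReal_le_ofReal (hpt x)) (ENNReal.ofReal_add_le)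
    have hIle : (2:ℝ≥0∞) * ∫⁻ x, ENNReal.ofReal (Φ₃ (|f x * g x| / (2 * a * b))) ≤ 2 := by
      calc (2:ℝ≥0∞) * ∫⁻ x, ENNReal.ofReal (Φ₃ (|f x * g x| / (2 * a * b)))
          ≤ ∫⁻ x, 2 * ENNReal.ofReal (Φ₃ (|f x * g x| / (2 * a * b))) :=
            lintegral_const_mul_le _ _
        _ ≤ ∫⁻ x, (ENNReal.ofReal (Φ₁ (|f x| / a)) + ENNReal.ofReal (Φ₂ (|g x| / b))) :=
            lintegral_mono hept
        _ = (∫⁻ x, ENNReal.ofReal (Φ₁ (|f x| / a)))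
            + ∫⁻ x, ENNReal.ofReal (Φ₂ (|g x| / b)) := lintegral_add_left hm1 _
        _ ≤ 1 + 1 := add_le_add haI hbI
        _ = 2 := by norm_num
    have hI : ∫⁻ x, ENNReal.ofReal (Φ₃ (|f x * g x| / (2 * a * b))) ≤ 1 := by
      have h2 : (2:ℝ≥0∞) ≠ 0 := by norm_num
      have h2' : (2:ℝ≥0∞) ≠ ⊤ := by norm_num
      rw [← ENNReal.mul_le_mul_iff_right h2 h2', mul_one]
      exact hIle
    refine sInf_le ⟨2 * a * b, ⟨hab0, ?_⟩, rfl⟩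
    simpa using hI
  -- identify the norms with real infima
  set p := sInf A with hp
  set q := sInf B with hq
  have hp0 : 0 ≤ p := Real.sInf_nonneg (fun x hx => hx.1.le)
  have hq0 : 0 ≤ q := Real.sInf_nonneg (fun x hx => hx.1.le)
  have hmono : Monotone ENNReal.ofReal := fun _ _ h => ENNReal.ofReal_le_ofReal h
  have hfp : luxNorm Φ₁ f = ENNReal.ofReal p :=
    (Monotone.map_csInf_of_continuousAt (ENNReal.continuous_ofReal.continuousAt)
      hmono hAne ⟨0, fun x hx => hx.1.le⟩).symm
  have hgq : luxNorm Φ₂ g = ENNReal.ofReal q :=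
    (Monotone.map_csInf_of_continuousAt (ENNReal.continuous_ofReal.continuousAt)
      hmono hBne ⟨0, fun x hx => hx.1.le⟩).symm
  rw [hfp, hgq]
  have hrhs : (2:ℝ≥0∞) * ENNReal.ofReal p * ENNReal.ofReal q
      = ENNReal.ofReal (2 * p * q) := by
    rw [ENNReal.ofReal_mul (by positivity), ENNReal.ofReal_mul (by norm_num : (0:ℝ) ≤ 2),
      ENNReal.ofReal_ofNat]
  rw [hrhs]
  -- limiting argument
  have hcont : Tendsto (fun δ : ℝ => ENNReal.ofReal (2 * (p + δ) * (q + δ)))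
      (nhdsWithin 0 (Ioi 0)) (nhds (ENNReal.ofReal (2 * p * q))) := by
    have hc : Continuous fun δ : ℝ => ENNReal.ofReal (2 * (p + δ) * (q + δ)) :=
      ENNReal.continuous_ofReal.comp (by continuity)
    have h0 := (hc.tendsto 0).mono_left (nhdsWithin_le_nhds (s := Ioi (0:ℝ)))
    simpa using h0
  refine ge_of_tendsto hcont ?_
  filter_upwards [self_mem_nhdsWithin] with δ (hδ : (0:ℝ) < δ)
  obtain ⟨a, haA, halt⟩ := exists_lt_of_csInf_lt hAne (by linarith : sInf A < p + δ)
  obtain ⟨b, hbB, hblt⟩ := exists_lt_of_csInf_lt hBne (by linarith : sInf B < q + δ)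
  refine le_trans (hkey a haA b hbB) (ENNReal.ofReal_le_ofReal ?_)
  have ha0 : 0 < a := haA.1
  have hb0 : 0 < b := hbB.1
  have hpd : 0 < p + δ := by linarith
  have hqd : 0 < q + δ := by linarith
  calc 2 * a * b ≤ 2 * (p + δ) * b := by nlinarith
    _ ≤ 2 * (p + δ) * (q + δ) := by nlinarith
end

section
/- Let X := B(a, r₀) ⊂ ℝⁿ be an open ball (a ∈ ℝⁿ, r₀ > 0). Let Φ₁, Φ₂ be Young functions, and suppose there is a Young function Φ such that Φ₁⁻¹(t)·Φ⁻¹(t) ≤ Φ₂⁻¹(t) for every t ≥ 0, where Ψ⁻¹(s) := inf { r ≥ 0 : Ψ(r) > s }. Then for every measurable f : X → ℝ with ‖f‖_{L_{Φ₁}(X)} < ∞ one has ‖f‖_{L_{Φ₂}(X)} ≤ (2 / Φ⁻¹(1/|B(a,r₀)|)) · ‖f‖_{L_{Φ₁}(X)}, where |B(a,r₀)| is the Lebesgue measure of the ball; in particular L_{Φ₁}(X) ⊆ L_{Φ₂}(X). -/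
open MeasureTheory Filter Set
open scoped ENNReal

lemma young_comb {Φ : ℝ → ℝ} (h : IsYoungFunction Φ) {x c : ℝ} (hx : 0 ≤ x)
    (hc0 : 0 ≤ c) (hc1 : c ≤ 1) : Φ (c * x) ≤ c * Φ x := by
  have hb : (0:ℝ) ≤ 1 - c := by linarith
  have hab : c + (1 - c) = 1 := by ring
  have := h.1.2 (Set.mem_Ici.mpr hx) (Set.mem_Ici.mpr (le_refl (0:ℝ))) hc0 hb hab
  simp only [smul_eq_mul, mul_zero, add_zero, h.2.2.1] at this
  exact this

-- monotone
lemma young_mono {Φ : ℝ → ℝ} (h : IsYoungFunction Φ) : MonotoneOn Φ (Set.Ici 0) := by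
  rintro x (hx : (0:ℝ) ≤ x) y (hy : (0:ℝ) ≤ y) hxy
  rcases eq_or_lt_of_le hy with rfl | hy'
  · have : x = 0 := le_antisymm hxy hx
    simp [this]
  · have hd : 0 ≤ x / y := div_nonneg hx hy'.le
    have hd1 : x / y ≤ 1 := (div_le_one hy').mpr hxy
    have := young_comb h hy'.le hd hd1
    rw [div_mul_cancel₀ x hy'.ne'] at this
    have hy0 := h.2.2.2.2 y hy'.le
    nlinarith

lemma young_slope {Φ : ℝ → ℝ} (h : IsYoungFunction Φ) {r : ℝ} (h0 : 0 ≤ r) (h1 : r ≤ 1) :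
    Φ r ≤ r * Φ 1 := by
  simpa using young_comb h zero_le_one h0 h1

lemma le_youngInv {Φ : ℝ → ℝ} (h : IsYoungFunction Φ) {u s : ℝ} (hu : 0 ≤ u)
    (hs : Φ u ≤ s) : u ≤ youngInv Φ s := by
  apply le_csInf (young_set_nonempty h s)
  rintro r ⟨hr0, hrs⟩
  by_contra hlt
  push_neg at hlt
  exact absurd (young_mono h hr0 hu hlt.le) (by linarith)

lemma young_apply_youngInv_le {Φ : ℝ → ℝ} (h : IsYoungFunction Φ) {s : ℝ} (hs : 0 ≤ s) :
    Φ (youngInv Φ s) ≤ s := by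
  set v := youngInv Φ s with hv
  have hv0 : 0 ≤ v := youngInv_nonneg Φ s
  have hbdd : BddBelow {r : ℝ | 0 ≤ r ∧ s < Φ r} := ⟨0, fun r hr => hr.1⟩
  have hlt : ∀ r, 0 ≤ r → r < v → Φ r ≤ s := by
    intro r hr0 hrv
    by_contra hc
    push_neg at hc
    exact absurd (csInf_le hbdd ⟨hr0, hc⟩) (not_le.mpr hrv)
  rcases eq_or_lt_of_le hv0 with heq | hpos
  · rw [← heq, h.2.2.1]; exact hs
  · have hc : Tendsto Φ (nhdsWithin v (Set.Iio v)) (nhds (Φ v)) :=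
      (h.2.1 v hv0).mono_left (nhdsWithin_mono v Set.Iio_subset_Iic_self)
    haveI : (nhdsWithin v (Set.Iio v)).NeBot := nhdsLT_neBot v
    refine le_of_tendsto hc ?_
    have h1 : ∀ᶠ x in nhdsWithin v (Set.Iio v), 0 < x :=
      eventually_nhdsWithin_of_eventually_nhds (eventually_gt_nhds hpos)
    have h2 : ∀ᶠ x in nhdsWithin v (Set.Iio v), x < v := eventually_mem_nhdsWithin
    filter_upwards [h1, h2] with x hx1 hx2
    exact hlt x hx1.le hx2

lemma youngInv_pos {Φ : ℝ → ℝ} (h : IsYoungFunction Φ) {s : ℝ} (hs : 0 < s) :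
    0 < youngInv Φ s := by
  set δ := min 1 (s / (|Φ 1| + 1)) with hδ
  have hδ0 : 0 < δ := lt_min one_pos (div_pos hs (by positivity))
  have hkey : ∀ r, 0 ≤ r → s < Φ r → δ ≤ r := by
    intro r hr0 hrs
    by_contra hc
    push_neg at hc
    have hr1 : r ≤ 1 := le_of_lt (lt_of_lt_of_le hc (min_le_left _ _))
    have := young_slope h hr0 hr1
    have h2 : r * Φ 1 ≤ r * |Φ 1| := by
      apply mul_le_mul_of_nonneg_left (le_abs_self _) hr0
    have h3 : r * |Φ 1| < δ * (|Φ 1| + 1) := by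
      rcases eq_or_lt_of_le hr0 with rfl | hr0'
      · simpa using mul_pos hδ0 (by positivity : (0:ℝ) < |Φ 1| + 1)
      · calc r * |Φ 1| < δ * |Φ 1| + δ := by nlinarith [abs_nonneg (Φ 1)]
          _ = δ * (|Φ 1| + 1) := by ring
    have h4 : δ * (|Φ 1| + 1) ≤ s := by
      have := min_le_right 1 (s / (|Φ 1| + 1))
      calc δ * (|Φ 1| + 1) ≤ (s / (|Φ 1| + 1)) * (|Φ 1| + 1) := by
            apply mul_le_mul_of_nonneg_right this (by positivity)
        _ = s := by field_simp
    linarith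
  exact lt_of_lt_of_le hδ0 (le_csInf (young_set_nonempty h s) fun r hr => hkey r hr.1 hr.2)

lemma young_prod_le_s11 {Φ₁ Φ₂ Φ : ℝ → ℝ} (h₁ : IsYoungFunction Φ₁) (h₂ : IsYoungFunction Φ₂)
    (hΦ : IsYoungFunction Φ)
    (hinv : ∀ t : ℝ, 0 ≤ t → youngInv Φ₁ t * youngInv Φ t ≤ youngInv Φ₂ t)
    {u v : ℝ} (hu : 0 ≤ u) (hv : 0 ≤ v) : Φ₂ (u * v) ≤ Φ₁ u + Φ v := by
  set t := Φ₁ u + Φ v with ht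
  have ht0 : 0 ≤ t := add_nonneg (h₁.2.2.2.2 u hu) (hΦ.2.2.2.2 v hv)
  have hu' : u ≤ youngInv Φ₁ t := le_youngInv h₁ hu (by have := hΦ.2.2.2.2 v hv; linarith)
  have hv' : v ≤ youngInv Φ t := le_youngInv hΦ hv (by have := h₁.2.2.2.2 u hu; linarith)
  have huv : u * v ≤ youngInv Φ₂ t :=
    le_trans (mul_le_mul hu' hv' hv (youngInv_nonneg _ _)) (hinv t ht0)
  calc Φ₂ (u * v) ≤ Φ₂ (youngInv Φ₂ t) :=
        young_mono h₂ (mul_nonneg hu hv) (youngInv_nonneg _ _) huv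
    _ ≤ t := young_apply_youngInv_le h₂ ht0

lemma young_half {Φ : ℝ → ℝ} (h : IsYoungFunction Φ) {x : ℝ} (hx : 0 ≤ x) :
    Φ (x / 2) ≤ 2⁻¹ * Φ x := by
  have := young_comb h hx (by norm_num : (0:ℝ) ≤ 2⁻¹) (by norm_num)
  calc Φ (x / 2) = Φ (2⁻¹ * x) := by rw [show x / 2 = 2⁻¹ * x by ring]
    _ ≤ 2⁻¹ * Φ x := this

lemma young_comp_measurable {α : Type*} [MeasurableSpace α] {Φ : ℝ → ℝ}
    (h : IsYoungFunction Φ) {g : α → ℝ} (hg : Measurable g) (hg0 : ∀ x, 0 ≤ g x) :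
    Measurable fun x => Φ (g x) := by
  have hM : Monotone fun x : ℝ => Φ (max x 0) := by
    intro x y hxy
    exact young_mono h (Set.mem_Ici.mpr (le_max_right _ _))
      (Set.mem_Ici.mpr (le_max_right _ _)) (max_le_max hxy le_rfl)
  have : (fun x => Φ (g x)) = fun x => Φ (max (g x) 0) := by
    funext x; rw [max_eq_left (hg0 x)]
  rw [this]
  exact hM.measurable.comp hg

/-- The Luxemburg (Orlicz) norm of `f` with respect to a measure `μ`, valued in `ℝ≥0∞`. -/
noncomputable def luxNormOn {n : ℕ} (Φ : ℝ → ℝ) (μ : Measure (EuclideanSpace ℝ (Fin n)))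
    (f : EuclideanSpace ℝ (Fin n) → ℝ) : ℝ≥0∞ :=
  sInf (ENNReal.ofReal ''
    {b : ℝ | 0 < b ∧ ∫⁻ x, ENNReal.ofReal (Φ (|f x| / b)) ∂μ ≤ 1})

theorem luxNormOn_ball_le {n : ℕ} (hn : 0 < n)
    (a : EuclideanSpace ℝ (Fin n)) (r₀ : ℝ) (hr₀ : 0 < r₀)
    (Φ₁ Φ₂ Φ : ℝ → ℝ)
    (h₁ : IsYoungFunction Φ₁) (h₂ : IsYoungFunction Φ₂) (hΦ : IsYoungFunction Φ)
    (hinv : ∀ t : ℝ, 0 ≤ t → youngInv Φ₁ t * youngInv Φ t ≤ youngInv Φ₂ t)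
    (f : EuclideanSpace ℝ (Fin n) → ℝ) (hf : Measurable f)
    (hfin : luxNormOn Φ₁ (volume.restrict (Metric.ball a r₀)) f < ⊤) :
    luxNormOn Φ₂ (volume.restrict (Metric.ball a r₀)) f ≤
      ENNReal.ofReal (2 / youngInv Φ (1 / (volume (Metric.ball a r₀)).toReal)) *
        luxNormOn Φ₁ (volume.restrict (Metric.ball a r₀)) f := by
  set μ := volume.restrict (Metric.ball a r₀) with hμ
  set V := volume (Metric.ball a r₀) with hV
  have hV0 : V ≠ 0 := (Metric.measure_ball_pos volume a hr₀).ne'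
  have hVt : V ≠ ⊤ := measure_ball_lt_top.ne
  have hVtR : 0 < V.toReal := ENNReal.toReal_pos hV0 hVt
  set s₀ : ℝ := 1 / V.toReal with hs₀def
  have hs₀ : 0 < s₀ := by positivity
  set v₀ : ℝ := youngInv Φ s₀ with hv₀def
  have hv₀ : 0 < v₀ := youngInv_pos hΦ hs₀
  set c : ℝ := 2 / v₀ with hcdef
  have hc : 0 < c := by positivity
  have hΦv₀ : Φ v₀ ≤ s₀ := young_apply_youngInv_le hΦ hs₀.le
  have hΦv₀0 : 0 ≤ Φ v₀ := hΦ.2.2.2.2 v₀ hv₀.le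
  -- key membership
  have hmem : ∀ b : ℝ, 0 < b → (∫⁻ x, ENNReal.ofReal (Φ₁ (|f x| / b)) ∂μ ≤ 1) →
      0 < c * b ∧ ∫⁻ x, ENNReal.ofReal (Φ₂ (|f x| / (c * b))) ∂μ ≤ 1 := by
    intro b hb hib
    refine ⟨mul_pos hc hb, ?_⟩
    have hpt : ∀ x, ENNReal.ofReal (Φ₂ (|f x| / (c * b))) ≤
        ENNReal.ofReal (2⁻¹ * Φ₁ (|f x| / b)) + ENNReal.ofReal (2⁻¹ * Φ v₀) := by
      intro x
      have hfx : 0 ≤ |f x| / b := div_nonneg (abs_nonneg _) hb.le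
      have e1 : |f x| / (c * b) = (|f x| / b * v₀) / 2 := by
        rw [hcdef, div_eq_div_iff (by positivity) (by norm_num : (2:ℝ) ≠ 0)]
        field_simp
      have e2 : Φ₂ ((|f x| / b * v₀) / 2) ≤ 2⁻¹ * Φ₂ (|f x| / b * v₀) :=
        young_half h₂ (mul_nonneg hfx hv₀.le)
      have e3 : Φ₂ (|f x| / b * v₀) ≤ Φ₁ (|f x| / b) + Φ v₀ :=
        young_prod_le_s11 h₁ h₂ hΦ hinv hfx hv₀.le
      calc ENNReal.ofReal (Φ₂ (|f x| / (c * b)))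
          ≤ ENNReal.ofReal (2⁻¹ * Φ₁ (|f x| / b) + 2⁻¹ * Φ v₀) := by
            apply ENNReal.ofReal_le_ofReal
            rw [e1]
            calc Φ₂ ((|f x| / b * v₀) / 2) ≤ 2⁻¹ * Φ₂ (|f x| / b * v₀) := e2
              _ ≤ 2⁻¹ * (Φ₁ (|f x| / b) + Φ v₀) := by linarith
              _ = 2⁻¹ * Φ₁ (|f x| / b) + 2⁻¹ * Φ v₀ := by ring
        _ ≤ _ := ENNReal.ofReal_add_le
    have hm1 : Measurable fun x => ENNReal.ofReal (Φ₁ (|f x| / b)) := by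
      apply Measurable.ennreal_ofReal
      exact young_comp_measurable h₁ (hf.abs.div_const b)
        (fun x => div_nonneg (abs_nonneg _) hb.le)
    calc ∫⁻ x, ENNReal.ofReal (Φ₂ (|f x| / (c * b))) ∂μ
        ≤ ∫⁻ x, (ENNReal.ofReal (2⁻¹ * Φ₁ (|f x| / b)) + ENNReal.ofReal (2⁻¹ * Φ v₀)) ∂μ :=
          lintegral_mono hpt
      _ = (∫⁻ x, ENNReal.ofReal (2⁻¹ * Φ₁ (|f x| / b)) ∂μ) + ENNReal.ofReal (2⁻¹ * Φ v₀) * μ Set.univ := by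
          rw [lintegral_add_right _ measurable_const, lintegral_const]
      _ = ENNReal.ofReal 2⁻¹ * (∫⁻ x, ENNReal.ofReal (Φ₁ (|f x| / b)) ∂μ)
            + ENNReal.ofReal (2⁻¹ * Φ v₀) * μ Set.univ := by
          congr 1
          simp_rw [ENNReal.ofReal_mul (by norm_num : (0:ℝ) ≤ 2⁻¹)]
          rw [lintegral_const_mul _ hm1]
      _ ≤ ENNReal.ofReal 2⁻¹ * 1 + (ENNReal.ofReal 2⁻¹ * ENNReal.ofReal s₀) * V := by
          apply add_le_add
          · exact mul_le_mul_right hib _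
          · rw [hμ, Measure.restrict_apply_univ, ← hV]
            apply mul_le_mul_left
            rw [← ENNReal.ofReal_mul (by norm_num : (0:ℝ) ≤ 2⁻¹)]
            exact ENNReal.ofReal_le_ofReal (by linarith)
      _ = ENNReal.ofReal 2⁻¹ + ENNReal.ofReal 2⁻¹ * (ENNReal.ofReal s₀ * V) := by
          rw [mul_one, mul_assoc]
      _ = 1 := by
          have : ENNReal.ofReal s₀ * V = 1 := by
            rw [hs₀def, one_div, ENNReal.ofReal_inv_of_pos hVtR,
              ENNReal.ofReal_toReal hVt, ENNReal.inv_mul_cancel hV0 hVt]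
          rw [this, mul_one, ← ENNReal.ofReal_add (by norm_num) (by norm_num)]
          norm_num
  -- conclude
  set c' : ℝ≥0∞ := ENNReal.ofReal c with hc'def
  have hc'0 : c' ≠ 0 := by
    rw [hc'def]; simpa using hc
  have hc't : c' ≠ ⊤ := ENNReal.ofReal_ne_top
  have hstep : ∀ y ∈ ENNReal.ofReal ''
      {b : ℝ | 0 < b ∧ ∫⁻ x, ENNReal.ofReal (Φ₁ (|f x| / b)) ∂μ ≤ 1},
      luxNormOn Φ₂ μ f ≤ c' * y := by
    rintro y ⟨b, ⟨hb, hib⟩, rfl⟩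
    obtain ⟨h1, h2⟩ := hmem b hb hib
    calc luxNormOn Φ₂ μ f ≤ ENNReal.ofReal (c * b) :=
          csInf_le (OrderBot.bddBelow _) ⟨c * b, ⟨h1, h2⟩, rfl⟩
      _ = c' * ENNReal.ofReal b := ENNReal.ofReal_mul hc.le
  have hdiv : luxNormOn Φ₂ μ f / c' ≤ luxNormOn Φ₁ μ f :=
    le_sInf fun y hy => ENNReal.div_le_of_le_mul' (hstep y hy)
  calc luxNormOn Φ₂ μ f = c' * (luxNormOn Φ₂ μ f / c') :=
        (ENNReal.mul_div_cancel hc'0 hc't).symm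
    _ ≤ c' * luxNormOn Φ₁ μ f := mul_le_mul_right hdiv _
end
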